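/- Suppose $1 < \gamma < p < 2$, and choose $\beta, \rho > 0$ with $\gamma < \rho/\beta < (\rho+1)/\beta < p$. Define $x^1(t) = t^\beta \cos(t^{-\rho})$ and $x^2(t) = t^\beta(2 + \sin(t^{-\rho}))$ for $t > 0$, with $x^1(0)=x^2(0)=0$. Then $x^1$ and $x^2$ are Hölder continuous of exponent $\alpha = 1/p$ on $[0,1]$. Moreover, $x^2(t) > 0$ for $t > 0$, and for all sufficiently small $t > 0$ one has $\int_0^t (x^2(s))^\gamma\, dx^1(s) \ge \mathrm{const} \cdot t^{\beta(\gamma+1)-\rho} \ge 3 t^\beta \ge x^2(t)$, where the integral is the classical Riemann–Stieltjes integral (well-defined since $x^1$ is locally Lipschitz on $(0,1]$). -/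

import Mathlib

open Real Set MeasureTheory intervalIntegral Filter

set_option maxHeartbeats 1000000

/-- MVT-type bound for rpow differences. -/
lemma rpow_abs_sub_le {q C : ℝ} {s : Set ℝ} (hs : Convex ℝ s)
    (hd : ∀ v ∈ s, v ≠ 0 ∨ 1 ≤ q) (hC : ∀ v ∈ s, |q * v ^ (q - 1)| ≤ C)
    {x y : ℝ} (hx : x ∈ s) (hy : y ∈ s) : |x ^ q - y ^ q| ≤ C * |x - y| := by
  have := hs.norm_image_sub_le_of_norm_hasDerivWithin_le
    (f := fun v : ℝ => v ^ q) (f' := fun v : ℝ => q * v ^ (q - 1))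
    (fun v hv => (Real.hasDerivAt_rpow_const (hd v hv)).hasDerivWithinAt)
    (fun v hv => by rw [Real.norm_eq_abs]; exact hC v hv) hy hx
  simpa [Real.norm_eq_abs] using this

lemma rpow_diff_le {β α : ℝ} (hβ : 0 < β) (hα : 0 < α) (hαβ : α ≤ β) (hα1 : α ≤ 1)
    {s t : ℝ} (hs : 0 ≤ s) (hst : s ≤ t) (ht1 : t ≤ 1) :
    t ^ β - s ^ β ≤ (β + 2) * (t - s) ^ α := by
  rcases eq_or_lt_of_le hst with rfl | hlt
  · simp only [sub_self]
    positivity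
  have hts : 0 < t - s := sub_pos.2 hlt
  have ht0 : 0 < t := lt_of_le_of_lt hs hlt
  have hts1 : t - s ≤ 1 := by linarith
  have key : ∀ x : ℝ, 0 < x → x ≤ 1 → x ^ β ≤ x ^ α → True := fun _ _ _ _ => trivial
  rcases eq_or_lt_of_le hs with rfl | hs0
  · rw [Real.zero_rpow hβ.ne', sub_zero, sub_zero]
    calc t ^ β ≤ t ^ α := Real.rpow_le_rpow_of_exponent_ge ht0 ht1 hαβ
    _ = 1 * t ^ α := (one_mul _).symm
    _ ≤ (β + 2) * t ^ α := by
        have : (0:ℝ) ≤ t ^ α := Real.rpow_nonneg ht0.le α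
        nlinarith
  rcases le_or_gt β 1 with hβ1 | hβ1
  · rcases le_or_gt (t - s) s with hc | hc
    · -- MVT on [s,t] with derivative bound β * s^(β-1)
      have hmvt : |t ^ β - s ^ β| ≤ (β * s ^ (β - 1)) * |t - s| := by
        refine rpow_abs_sub_le (convex_Icc s t) (fun v hv => Or.inl (by
          have := hv.1; intro h; rw [h] at this; exact absurd this (not_le.2 hs0)))
          (fun v hv => ?_) (right_mem_Icc.2 hst) (left_mem_Icc.2 hst)
        have hv0 : (0:ℝ) < v := lt_of_lt_of_le hs0 hv.1
        rw [abs_mul, abs_of_pos hβ, abs_of_pos (Real.rpow_pos_of_pos hv0 _)]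
        have : v ^ (β - 1) ≤ s ^ (β - 1) :=
          Real.rpow_le_rpow_of_nonpos hs0 hv.1 (by linarith)
        nlinarith [Real.rpow_pos_of_pos hs0 (β-1)]
      have h2 : (t - s : ℝ) = (t - s) ^ (1 - α) * (t - s) ^ α := by
        rw [← Real.rpow_add hts, sub_add_cancel, Real.rpow_one]
      have h3 : (t - s) ^ (1 - α) ≤ s ^ (1 - α) :=
        Real.rpow_le_rpow hts.le hc (by linarith)
      have h4 : s ^ (β - 1) * s ^ (1 - α) = s ^ (β - α) := by
        rw [← Real.rpow_add hs0]; ring_nf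
      have h5 : s ^ (β - α) ≤ 1 := Real.rpow_le_one hs0.le (by linarith) (by linarith)
      have habs : t ^ β - s ^ β ≤ |t ^ β - s ^ β| := le_abs_self _
      have hpos : (0:ℝ) < (t-s) ^ α := Real.rpow_pos_of_pos hts α
      have hposs : (0:ℝ) < s ^ (β - 1) := Real.rpow_pos_of_pos hs0 _
      have hpos2 : (0:ℝ) ≤ (t-s) ^ (1-α) := Real.rpow_nonneg hts.le _
      have hX : s ^ (β - 1) * (t - s) ^ (1 - α) ≤ 1 := by
        calc s ^ (β - 1) * (t - s) ^ (1 - α) ≤ s ^ (β - 1) * s ^ (1 - α) := by nlinarith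
          _ = s ^ (β - α) := h4
          _ ≤ 1 := h5
      have heq : β * s ^ (β - 1) * (t - s) = β * (s ^ (β - 1) * (t - s) ^ (1 - α)) * (t - s) ^ α := by
        nth_rewrite 1 [h2]; ring
      calc t ^ β - s ^ β ≤ β * s ^ (β - 1) * |t - s| := habs.trans hmvt
        _ = β * (s ^ (β - 1) * (t - s) ^ (1 - α)) * (t - s) ^ α := by
            rw [abs_of_pos hts]; exact heq
        _ ≤ β * 1 * (t - s) ^ α :=
            mul_le_mul_of_nonneg_right (mul_le_mul_of_nonneg_left hX hβ.le) hpos.le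
        _ ≤ (β + 2) * (t - s) ^ α := by nlinarith
    · -- t ≤ 2 (t - s)
      have h1 : t ≤ 2 * (t - s) := by linarith
      have h2 : t ^ β ≤ (2 * (t - s)) ^ β := Real.rpow_le_rpow ht0.le h1 hβ.le
      have h3 : (2 * (t - s)) ^ β = 2 ^ β * (t - s) ^ β :=
        Real.mul_rpow (by norm_num) hts.le
      have h4 : (2:ℝ) ^ β ≤ 2 := by
        calc (2:ℝ) ^ β ≤ (2:ℝ) ^ (1:ℝ) :=
              Real.rpow_le_rpow_of_exponent_le one_le_two hβ1
          _ = 2 := Real.rpow_one 2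
      have h5 : (t - s) ^ β ≤ (t - s) ^ α := Real.rpow_le_rpow_of_exponent_ge hts hts1 hαβ
      have h6 : (0:ℝ) ≤ (t-s)^β := Real.rpow_nonneg hts.le _
      have h7 : (0:ℝ) ≤ (t-s)^α := Real.rpow_nonneg hts.le _
      have h8 : (0:ℝ) < s ^ β := Real.rpow_pos_of_pos hs0 β
      nlinarith
  · -- β ≥ 1 : MVT on [0,1] with bound β
    have hmvt : |t ^ β - s ^ β| ≤ β * |t - s| := by
      refine rpow_abs_sub_le (convex_Icc (0:ℝ) 1) (fun v _ => Or.inr hβ1.le)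
        (fun v hv => ?_) ⟨by linarith, ht1⟩ ⟨hs, by linarith⟩
      rw [abs_mul, abs_of_pos hβ, abs_of_nonneg (Real.rpow_nonneg hv.1 _)]
      have : v ^ (β - 1) ≤ 1 := Real.rpow_le_one hv.1 hv.2 (by linarith)
      nlinarith
    have h5 : (t - s) ≤ (t - s) ^ α := by
      calc (t-s) = (t-s) ^ (1:ℝ) := (Real.rpow_one _).symm
        _ ≤ (t-s) ^ α := Real.rpow_le_rpow_of_exponent_ge hts hts1 hα1
    have h7 : (0:ℝ) ≤ (t-s)^α := Real.rpow_nonneg hts.le _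
    calc t ^ β - s ^ β ≤ β * |t - s| := (le_abs_self _).trans hmvt
      _ = β * (t - s) := by rw [abs_of_pos hts]
      _ ≤ β * (t-s)^α := by nlinarith
      _ ≤ (β + 2) * (t-s)^α := by nlinarith

lemma osc_holder {β ρ α M L : ℝ} (hβ : 0 < β) (hρ : 0 < ρ) (hα : 0 < α) (hα1 : α ≤ 1)
    (hαβ : α * (ρ + 1) ≤ β) (hM : 0 ≤ M) (hL : 0 ≤ L)
    {F : ℝ → ℝ} (hFM : ∀ u, |F u| ≤ M) (hFL : ∀ u v, |F u - F v| ≤ L * |u - v|)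
    {s t : ℝ} (hs : 0 ≤ s) (hst : s ≤ t) (ht : t ≤ 1) :
    |t ^ β * F (t ^ (-ρ)) - s ^ β * F (s ^ (-ρ))| ≤
      (M * (β + 2) + 2 * M + L * ρ) * (t - s) ^ α := by
  have hCnn : 0 ≤ M * (β + 2) + 2 * M + L * ρ := by positivity
  have hαβ' : α ≤ β := by nlinarith
  rcases eq_or_lt_of_le hst with rfl | hlt
  · simp [Real.zero_rpow hα.ne']
  have hts : 0 < t - s := sub_pos.2 hlt
  have ht0 : 0 < t := lt_of_le_of_lt hs hlt
  have htsa : 0 < (t - s) ^ α := Real.rpow_pos_of_pos hts α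
  have hts1 : t - s ≤ 1 := by linarith
  rcases eq_or_lt_of_le hs with rfl | hs0
  · rw [Real.zero_rpow hβ.ne', zero_mul, sub_zero, sub_zero, abs_mul]
    have h1 : |t ^ β| = t ^ β := abs_of_pos (Real.rpow_pos_of_pos ht0 β)
    have h2 : t ^ β ≤ t ^ α := Real.rpow_le_rpow_of_exponent_ge ht0 ht ‹α ≤ β›
    have h3 : (0:ℝ) < t ^ α := Real.rpow_pos_of_pos ht0 α
    calc |t ^ β| * |F (t ^ (-ρ))| ≤ t ^ β * M := by
          rw [h1]; exact mul_le_mul_of_nonneg_left (hFM _) (Real.rpow_pos_of_pos ht0 β).le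
      _ ≤ M * t ^ α := by nlinarith
      _ ≤ (M * (β + 2) + 2 * M + L * ρ) * t ^ α := by
          nlinarith [mul_nonneg (show (0:ℝ) ≤ M * (β + 2) + M + L * ρ by positivity) h3.le]
  -- 0 < s < t
  have hsβ : (0:ℝ) < s ^ β := Real.rpow_pos_of_pos hs0 β
  have decomp : t ^ β * F (t ^ (-ρ)) - s ^ β * F (s ^ (-ρ)) =
      (t ^ β - s ^ β) * F (t ^ (-ρ)) + s ^ β * (F (t ^ (-ρ)) - F (s ^ (-ρ))) := by ring
  have habs : |t ^ β * F (t ^ (-ρ)) - s ^ β * F (s ^ (-ρ))| ≤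
      (t ^ β - s ^ β) * M + s ^ β * |F (t ^ (-ρ)) - F (s ^ (-ρ))| := by
    rw [decomp]
    refine (abs_add_le _ _).trans (add_le_add ?_ ?_)
    · rw [abs_mul, abs_of_nonneg (sub_nonneg.2 (Real.rpow_le_rpow hs hst hβ.le))]
      exact mul_le_mul_of_nonneg_left (hFM _)
        (sub_nonneg.2 (Real.rpow_le_rpow hs hst hβ.le))
    · rw [abs_mul, abs_of_pos hsβ]
  have hT1 : (t ^ β - s ^ β) * M ≤ M * (β + 2) * (t - s) ^ α := by
    have := rpow_diff_le hβ hα hαβ' hα1 hs hst ht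
    nlinarith [sub_nonneg.2 (Real.rpow_le_rpow hs hst hβ.le)]
  have hT2 : s ^ β * |F (t ^ (-ρ)) - F (s ^ (-ρ))| ≤ (2 * M + L * ρ) * (t - s) ^ α := by
    rcases le_or_gt (s ^ (ρ + 1)) (t - s) with hc | hc
    · -- small s case
      have hF2 : |F (t ^ (-ρ)) - F (s ^ (-ρ))| ≤ 2 * M := by
        calc |F (t ^ (-ρ)) - F (s ^ (-ρ))| ≤ |F (t ^ (-ρ))| + |F (s ^ (-ρ))| := abs_sub _ _
          _ ≤ 2 * M := by linarith [hFM (t ^ (-ρ)), hFM (s ^ (-ρ))]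
      have he : s ^ β = (s ^ (ρ + 1)) ^ (β / (ρ + 1)) := by
        rw [← Real.rpow_mul hs]
        congr 1
        field_simp
      have h1 : s ^ β ≤ (t - s) ^ (β / (ρ + 1)) := by
        rw [he]
        exact Real.rpow_le_rpow (Real.rpow_nonneg hs _) hc (by positivity)
      have h2 : (t - s) ^ (β / (ρ + 1)) ≤ (t - s) ^ α := by
        refine Real.rpow_le_rpow_of_exponent_ge hts hts1 ?_
        rw [le_div_iff₀ (by linarith : (0:ℝ) < ρ + 1)]
        linarith [hαβ]
      calc s ^ β * |F (t ^ (-ρ)) - F (s ^ (-ρ))| ≤ s ^ β * (2 * M) :=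
            mul_le_mul_of_nonneg_left hF2 hsβ.le
        _ ≤ (t - s) ^ α * (2 * M) := by nlinarith
        _ ≤ (2 * M + L * ρ) * (t - s) ^ α := by
            nlinarith [mul_nonneg (mul_nonneg hL hρ.le) htsa.le]
    · -- large s case
      have hρs : (0:ℝ) < s ^ (-ρ - 1) := Real.rpow_pos_of_pos hs0 _
      have hmvt : |s ^ (-ρ) - t ^ (-ρ)| ≤ ρ * s ^ (-ρ - 1) * |s - t| := by
        refine rpow_abs_sub_le (convex_Icc s t) (fun v hv => Or.inl ?_) (fun v hv => ?_)
          (left_mem_Icc.2 hst) (right_mem_Icc.2 hst)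
        · exact (lt_of_lt_of_le hs0 hv.1).ne'
        · have hv0 : (0:ℝ) < v := lt_of_lt_of_le hs0 hv.1
          rw [abs_mul, abs_of_neg (neg_neg_iff_pos.2 hρ : -ρ < 0), neg_neg,
            abs_of_pos (Real.rpow_pos_of_pos hv0 _)]
          have : v ^ (-ρ - 1) ≤ s ^ (-ρ - 1) :=
            Real.rpow_le_rpow_of_nonpos hs0 hv.1 (by linarith)
          nlinarith
      have hF2 : |F (t ^ (-ρ)) - F (s ^ (-ρ))| ≤ L * (ρ * s ^ (-ρ - 1) * (t - s)) := by
        calc |F (t ^ (-ρ)) - F (s ^ (-ρ))| ≤ L * |t ^ (-ρ) - s ^ (-ρ)| := hFL _ _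
          _ ≤ L * (ρ * s ^ (-ρ - 1) * (t - s)) := by
              rw [abs_sub_comm s t, abs_of_pos hts] at hmvt
              rw [abs_sub_comm]
              exact mul_le_mul_of_nonneg_left hmvt hL
      have key : s ^ β * (ρ * s ^ (-ρ - 1) * (t - s)) ≤ ρ * (t - s) ^ α := by
        have e1 : s ^ β * s ^ (-ρ - 1) = s ^ (β - ρ - 1) := by
          rw [← Real.rpow_add hs0]; ring_nf
        have e2 : (t - s) = (t - s) ^ (1 - α) * (t - s) ^ α := by
          rw [← Real.rpow_add hts, sub_add_cancel, Real.rpow_one]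
        have e3 : (t - s) ^ (1 - α) ≤ s ^ ((ρ + 1) * (1 - α)) := by
          rw [Real.rpow_mul hs]
          exact Real.rpow_le_rpow hts.le hc.le (by linarith)
        have e4 : s ^ (β - ρ - 1) * s ^ ((ρ + 1) * (1 - α)) = s ^ (β - (ρ + 1) * α) := by
          rw [← Real.rpow_add hs0]; ring_nf
        have e5 : s ^ (β - (ρ + 1) * α) ≤ 1 := by
          refine Real.rpow_le_one hs0.le (by linarith) ?_
          nlinarith
        have h6 : s ^ β * (ρ * s ^ (-ρ - 1) * (t - s)) =
            ρ * (s ^ (β - ρ - 1) * (t - s) ^ (1 - α)) * (t - s) ^ α := by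
          nth_rewrite 1 [e2]
          rw [← e1]; ring
        rw [h6]
        have h7 : s ^ (β - ρ - 1) * (t - s) ^ (1 - α) ≤ 1 := by
          calc s ^ (β - ρ - 1) * (t - s) ^ (1 - α)
              ≤ s ^ (β - ρ - 1) * s ^ ((ρ + 1) * (1 - α)) := by
                have := Real.rpow_pos_of_pos hs0 (β - ρ - 1)
                nlinarith
            _ = s ^ (β - (ρ + 1) * α) := e4
            _ ≤ 1 := e5
        calc ρ * (s ^ (β - ρ - 1) * (t - s) ^ (1 - α)) * (t - s) ^ α
            ≤ ρ * 1 * (t - s) ^ α :=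
              mul_le_mul_of_nonneg_right (mul_le_mul_of_nonneg_left h7 hρ.le) htsa.le
          _ = ρ * (t - s) ^ α := by ring
      calc s ^ β * |F (t ^ (-ρ)) - F (s ^ (-ρ))|
          ≤ s ^ β * (L * (ρ * s ^ (-ρ - 1) * (t - s))) :=
            mul_le_mul_of_nonneg_left hF2 hsβ.le
        _ = L * (s ^ β * (ρ * s ^ (-ρ - 1) * (t - s))) := by ring
        _ ≤ L * (ρ * (t - s) ^ α) := mul_le_mul_of_nonneg_left key hL
        _ ≤ (2 * M + L * ρ) * (t - s) ^ α := by nlinarith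
  calc |t ^ β * F (t ^ (-ρ)) - s ^ β * F (s ^ (-ρ))|
      ≤ (t ^ β - s ^ β) * M + s ^ β * |F (t ^ (-ρ)) - F (s ^ (-ρ))| := habs
    _ ≤ M * (β + 2) * (t - s) ^ α + (2 * M + L * ρ) * (t - s) ^ α := add_le_add hT1 hT2
    _ = (M * (β + 2) + 2 * M + L * ρ) * (t - s) ^ α := by ring

noncomputable def oscF (γ : ℝ) : ℝ → ℝ := fun u => (2 + Real.sin u) ^ γ * Real.sin u

noncomputable def oscM (γ : ℝ) : ℝ := ∫ u in (0:ℝ)..(2 * π), oscF γ u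

lemma two_add_sin_pos (u : ℝ) : (0:ℝ) < 2 + Real.sin u := by
  nlinarith [Real.neg_one_le_sin u]

lemma two_add_sin_rpow_le {γ : ℝ} (hγ0 : 0 ≤ γ) (hγ2 : γ ≤ 2) (u : ℝ) :
    (2 + Real.sin u) ^ γ ≤ 9 := by
  calc (2 + Real.sin u) ^ γ ≤ (3:ℝ) ^ γ :=
        Real.rpow_le_rpow (two_add_sin_pos u).le (by nlinarith [Real.sin_le_one u]) hγ0
    _ ≤ (3:ℝ) ^ (2:ℝ) := Real.rpow_le_rpow_of_exponent_le (by norm_num) hγ2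
    _ = 9 := by
        rw [show (2:ℝ) = ((2:ℕ):ℝ) by norm_num, Real.rpow_natCast]; norm_num

lemma oscF_continuous (γ : ℝ) (hγ0 : 0 ≤ γ) : Continuous (oscF γ) := by
  exact (((continuous_const.add Real.continuous_sin)).rpow_const (fun x => Or.inr hγ0)).mul
    Real.continuous_sin

lemma oscG_continuous (γ : ℝ) (hγ0 : 0 ≤ γ) :
    Continuous (fun u => (2 + Real.sin u) ^ γ * Real.cos u) := by
  exact (((continuous_const.add Real.continuous_sin)).rpow_const (fun x => Or.inr hγ0)).mul
    Real.continuous_cos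

lemma oscF_periodic (γ : ℝ) : Function.Periodic (oscF γ) (2 * π) := by
  intro u; simp [oscF, Real.sin_add_two_pi]

lemma oscF_bound {γ : ℝ} (hγ0 : 0 ≤ γ) (hγ2 : γ ≤ 2) (u : ℝ) : |oscF γ u| ≤ 9 := by
  have h1 : (0:ℝ) ≤ (2 + Real.sin u) ^ γ := Real.rpow_nonneg (two_add_sin_pos u).le γ
  have h2 := two_add_sin_rpow_le hγ0 hγ2 u
  rw [oscF, abs_mul, abs_of_nonneg h1]
  calc (2 + Real.sin u) ^ γ * |Real.sin u| ≤ 9 * 1 := by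
        have := Real.abs_sin_le_one u
        nlinarith
    _ = 9 := by ring

lemma oscG_bound {γ : ℝ} (hγ0 : 0 ≤ γ) (hγ2 : γ ≤ 2) (u : ℝ) :
    |(2 + Real.sin u) ^ γ * Real.cos u| ≤ 9 := by
  have h1 : (0:ℝ) ≤ (2 + Real.sin u) ^ γ := Real.rpow_nonneg (two_add_sin_pos u).le γ
  have h2 := two_add_sin_rpow_le hγ0 hγ2 u
  rw [abs_mul, abs_of_nonneg h1]
  calc (2 + Real.sin u) ^ γ * |Real.cos u| ≤ 9 * 1 := by
        have := Real.abs_cos_le_one u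
        nlinarith
    _ = 9 := by ring

lemma oscM_pos {γ : ℝ} (hγ0 : 0 < γ) : 0 < oscM γ := by
  have hcont : Continuous (oscF γ) := oscF_continuous γ hγ0.le
  have hint : ∀ a b : ℝ, IntervalIntegrable (oscF γ) volume a b :=
    fun a b => hcont.intervalIntegrable a b
  have hsplit : oscM γ = (∫ u in (0:ℝ)..π, oscF γ u) + ∫ u in π..(2*π), oscF γ u :=
    (integral_add_adjacent_intervals (hint 0 π) (hint π (2*π))).symm
  have hshift : (∫ u in π..(2*π), oscF γ u) = ∫ u in (0:ℝ)..π, oscF γ (u + π) := by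
    rw [intervalIntegral.integral_comp_add_right (fun u => oscF γ u) π]
    norm_num [two_mul]
  have hI2 : IntervalIntegrable (fun u => oscF γ (u + π)) volume 0 π :=
    (hcont.comp (continuous_id.add continuous_const)).intervalIntegrable 0 π
  have hsum : oscM γ = ∫ u in (0:ℝ)..π, (oscF γ u + oscF γ (u + π)) := by
    rw [hsplit, hshift, ← intervalIntegral.integral_add (hint 0 π) hI2]
  rw [hsum]
  apply intervalIntegral.intervalIntegral_pos_of_pos_on
  · exact (hint 0 π).add hI2
  · intro x hx
    have hsx : 0 < Real.sin x := Real.sin_pos_of_pos_of_lt_pi hx.1 hx.2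
    have hx2 : Real.sin (x + π) = -Real.sin x := Real.sin_add_pi x
    have hlt : (2 - Real.sin x) ^ γ < (2 + Real.sin x) ^ γ :=
      Real.rpow_lt_rpow (by nlinarith [Real.sin_le_one x]) (by nlinarith) hγ0
    simp only [oscF, hx2]
    have : (2 + -Real.sin x) = 2 - Real.sin x := by ring
    rw [this]
    nlinarith
  · exact Real.pi_pos

lemma rpow_intervalIntegrable {q a b : ℝ} (ha : 0 < a) (hb : 0 < b) :
    IntervalIntegrable (fun u : ℝ => u ^ q) volume a b := by
  apply ContinuousOn.intervalIntegrable
  intro u hu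
  have hu0 : u ≠ 0 := by
    rcases le_total a b with h | h
    · rw [uIcc_of_le h] at hu; exact (lt_of_lt_of_le ha hu.1).ne'
    · rw [uIcc_of_ge h] at hu; exact (lt_of_lt_of_le hb hu.1).ne'
  exact (Real.continuousAt_rpow_const u q (Or.inl hu0)).continuousWithinAt

/-- Per-period lower bound. -/
lemma per_period {γ κ : ℝ} (hγ1 : 1 ≤ γ) (hγ2 : γ ≤ 2) (hκ : 1 < κ) {a : ℝ}
    (ha1 : 1 ≤ a) (ha2 : 72 * π ^ 2 * κ / oscM γ ≤ a) :
    oscM γ / (4 * π) * ∫ u in a..a + 2 * π, u ^ (-κ) ≤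
      ∫ u in a..a + 2 * π, u ^ (-κ) * oscF γ u := by
  have hπ := Real.pi_pos
  have ha0 : (0 : ℝ) < a := lt_of_lt_of_le one_pos ha1
  have hb0 : (0 : ℝ) < a + 2 * π := by linarith
  have hm := oscM_pos (show (0:ℝ) < γ by linarith)
  have haκ : (0:ℝ) < a ^ (-κ) := Real.rpow_pos_of_pos ha0 _
  have haκ1 : (0:ℝ) < a ^ (-κ - 1) := Real.rpow_pos_of_pos ha0 _
  have hcont : Continuous (oscF γ) := oscF_continuous γ (by linarith)
  have hIpow : IntervalIntegrable (fun u : ℝ => u ^ (-κ)) volume a (a + 2*π) :=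
    rpow_intervalIntegrable ha0 hb0
  have hIfull : IntervalIntegrable (fun u : ℝ => u ^ (-κ) * oscF γ u) volume a (a + 2*π) :=
    hIpow.mul_continuousOn hcont.continuousOn
  have hIc : IntervalIntegrable (fun u : ℝ => a ^ (-κ) * oscF γ u) volume a (a + 2*π) :=
    (hcont.intervalIntegrable _ _).const_mul _
  have hId : IntervalIntegrable (fun u : ℝ => (u ^ (-κ) - a ^ (-κ)) * oscF γ u)
      volume a (a + 2*π) := by
    have : (fun u : ℝ => (u ^ (-κ) - a ^ (-κ)) * oscF γ u) =
        fun u : ℝ => u ^ (-κ) * oscF γ u - a ^ (-κ) * oscF γ u := by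
      funext u; ring
    rw [this]; exact hIfull.sub hIc
  -- decomposition
  have hdecomp : (∫ u in a..a + 2*π, u ^ (-κ) * oscF γ u) =
      (∫ u in a..a + 2*π, a ^ (-κ) * oscF γ u) +
      ∫ u in a..a + 2*π, (u ^ (-κ) - a ^ (-κ)) * oscF γ u := by
    rw [← intervalIntegral.integral_add hIc hId]
    congr 1; funext u; ring
  have hconst : (∫ u in a..a + 2*π, a ^ (-κ) * oscF γ u) = a ^ (-κ) * oscM γ := by
    rw [intervalIntegral.integral_const_mul]
    congr 1
    have := (oscF_periodic γ).intervalIntegral_add_eq a 0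
    rw [this, zero_add]
    rfl
  have herr : |∫ u in a..a + 2*π, (u ^ (-κ) - a ^ (-κ)) * oscF γ u| ≤
      36 * π ^ 2 * κ * a ^ (-κ - 1) := by
    have hb : ∀ x ∈ Set.uIoc a (a + 2*π),
        ‖(x ^ (-κ) - a ^ (-κ)) * oscF γ x‖ ≤ (κ * a ^ (-κ - 1) * (2*π)) * 9 := by
      intro x hx
      rw [Set.uIoc_of_le (by linarith)] at hx
      have hx0 : 0 < x := lt_of_lt_of_le ha0 hx.1.le
      have hdiff : |x ^ (-κ) - a ^ (-κ)| ≤ (κ * a ^ (-κ - 1)) * |x - a| := by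
        refine rpow_abs_sub_le (convex_Icc a (a + 2*π)) (fun v hv => Or.inl
          (lt_of_lt_of_le ha0 hv.1).ne') (fun v hv => ?_)
          ⟨hx.1.le, hx.2⟩ (left_mem_Icc.2 (by linarith))
        have hv0 : (0:ℝ) < v := lt_of_lt_of_le ha0 hv.1
        rw [abs_mul, abs_of_neg (by linarith : -κ < 0),
          abs_of_pos (Real.rpow_pos_of_pos hv0 _)]
        have : v ^ (-κ - 1) ≤ a ^ (-κ - 1) :=
          Real.rpow_le_rpow_of_nonpos ha0 hv.1 (by linarith)
        nlinarith
      have hxa : |x - a| ≤ 2 * π := by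
        rw [abs_of_pos (by linarith [hx.1] : (0:ℝ) < x - a)]
        linarith [hx.2]
      have hosc := oscF_bound (by linarith : (0:ℝ) ≤ γ) hγ2 x
      rw [Real.norm_eq_abs, abs_mul]
      have h1 : |x ^ (-κ) - a ^ (-κ)| ≤ κ * a ^ (-κ - 1) * (2*π) := by
        calc |x ^ (-κ) - a ^ (-κ)| ≤ (κ * a ^ (-κ - 1)) * |x - a| := hdiff
          _ ≤ κ * a ^ (-κ - 1) * (2*π) :=
              mul_le_mul_of_nonneg_left hxa (by positivity)
      nlinarith [abs_nonneg (x ^ (-κ) - a ^ (-κ)), abs_nonneg (oscF γ x)]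
    have := intervalIntegral.norm_integral_le_of_norm_le_const hb
    rw [Real.norm_eq_abs] at this
    have heq : |a + 2*π - a| = 2 * π := by
      rw [show a + 2*π - a = 2*π by ring, abs_of_pos (by linarith)]
    rw [heq] at this
    calc |∫ u in a..a + 2*π, (u ^ (-κ) - a ^ (-κ)) * oscF γ u| ≤
          (κ * a ^ (-κ - 1) * (2*π)) * 9 * (2*π) := this
      _ = 36 * π ^ 2 * κ * a ^ (-κ - 1) := by ring
  -- integral of u^(-κ) is at most 2π a^(-κ)
  have hpow_le : (∫ u in a..a + 2*π, u ^ (-κ)) ≤ 2 * π * a ^ (-κ) := by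
    have hmono : ∀ u ∈ Set.Icc a (a + 2*π), u ^ (-κ) ≤ a ^ (-κ) := fun u hu =>
      Real.rpow_le_rpow_of_nonpos ha0 hu.1 (by linarith)
    calc (∫ u in a..a + 2*π, u ^ (-κ)) ≤ ∫ _u in a..a + 2*π, a ^ (-κ) :=
          intervalIntegral.integral_mono_on (by linarith) hIpow
            (intervalIntegrable_const) hmono
      _ = 2 * π * a ^ (-κ) := by
          rw [intervalIntegral.integral_const]
          rw [smul_eq_mul]; ring
  have hpow_nonneg : 0 ≤ (∫ u in a..a + 2*π, u ^ (-κ)) := by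
    apply intervalIntegral.integral_nonneg (by linarith)
    intro u hu
    exact Real.rpow_nonneg (by linarith [hu.1] : (0:ℝ) ≤ u) _
  -- a^(-κ-1) = a^(-κ)/a
  have hsplit_pow : a ^ (-κ - 1) = a ^ (-κ) * a⁻¹ := by
    rw [← Real.rpow_neg_one a, ← Real.rpow_add ha0]; ring_nf
  -- main estimate
  have hmain : a ^ (-κ) * oscM γ - 36 * π ^ 2 * κ * a ^ (-κ - 1) ≥
      oscM γ / 2 * a ^ (-κ) := by
    have ha' : 72 * π ^ 2 * κ ≤ a * oscM γ := by
      rw [div_le_iff₀ hm] at ha2; linarith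
    rw [hsplit_pow]
    have hainv : a⁻¹ * a = 1 := inv_mul_cancel₀ ha0.ne'
    have : 36 * π ^ 2 * κ * a⁻¹ ≤ oscM γ / 2 := by
      rw [← mul_le_mul_iff_of_pos_right ha0]
      calc 36 * π ^ 2 * κ * a⁻¹ * a = 36 * π ^ 2 * κ * (a⁻¹ * a) := by ring
        _ = 36 * π ^ 2 * κ := by rw [hainv]; ring
        _ ≤ oscM γ / 2 * a := by nlinarith
    nlinarith
  calc oscM γ / (4 * π) * ∫ u in a..a + 2*π, u ^ (-κ)
      ≤ oscM γ / (4 * π) * (2 * π * a ^ (-κ)) := by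
        apply mul_le_mul_of_nonneg_left hpow_le
        positivity
    _ = oscM γ / 2 * a ^ (-κ) := by field_simp; ring
    _ ≤ a ^ (-κ) * oscM γ - 36 * π ^ 2 * κ * a ^ (-κ - 1) := hmain
    _ = (∫ u in a..a + 2*π, a ^ (-κ) * oscF γ u) +
        (- (36 * π ^ 2 * κ * a ^ (-κ - 1))) := by rw [hconst]; ring
    _ ≤ (∫ u in a..a + 2*π, a ^ (-κ) * oscF γ u) +
        ∫ u in a..a + 2*π, (u ^ (-κ) - a ^ (-κ)) * oscF γ u := by
        have := neg_abs_le (∫ u in a..a + 2*π, (u ^ (-κ) - a ^ (-κ)) * oscF γ u)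
        linarith [herr]
    _ = ∫ u in a..a + 2*π, u ^ (-κ) * oscF γ u := hdecomp.symm

lemma accumulate_periods {γ κ : ℝ} (hγ1 : 1 ≤ γ) (hγ2 : γ ≤ 2) (hκ : 1 < κ) {U : ℝ}
    (hU1 : 1 ≤ U) (hU2 : 72 * π ^ 2 * κ / oscM γ ≤ U) (N : ℕ) :
    oscM γ / (4 * π) * ∫ u in U..U + 2 * π * N, u ^ (-κ) ≤
      ∫ u in U..U + 2 * π * N, u ^ (-κ) * oscF γ u := by
  have hπ := Real.pi_pos
  have hU0 : (0:ℝ) < U := lt_of_lt_of_le one_pos hU1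
  have hcont : Continuous (oscF γ) := oscF_continuous γ (by linarith)
  induction N with
  | zero => simp
  | succ n ih =>
    have hnn : (0:ℝ) ≤ 2*π*n := by positivity
    have hIpow1 : IntervalIntegrable (fun u : ℝ => u ^ (-κ)) volume U (U + 2*π*n) :=
      rpow_intervalIntegrable hU0 (by positivity)
    have hIpow2 : IntervalIntegrable (fun u : ℝ => u ^ (-κ)) volume
        (U + 2*π*n) (U + 2*π*(n+1:ℕ)) :=
      rpow_intervalIntegrable (by positivity) (by positivity)
    have hIfull1 : IntervalIntegrable (fun u : ℝ => u ^ (-κ) * oscF γ u) volume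
        U (U + 2*π*n) := hIpow1.mul_continuousOn hcont.continuousOn
    have hIfull2 : IntervalIntegrable (fun u : ℝ => u ^ (-κ) * oscF γ u) volume
        (U + 2*π*n) (U + 2*π*(n+1:ℕ)) := hIpow2.mul_continuousOn hcont.continuousOn
    have hsplit1 : (∫ u in U..U + 2*π*(n+1:ℕ), u ^ (-κ)) =
        (∫ u in U..U + 2*π*n, u ^ (-κ)) +
        ∫ u in (U + 2*π*n)..(U + 2*π*(n+1:ℕ)), u ^ (-κ) :=
      (intervalIntegral.integral_add_adjacent_intervals hIpow1 hIpow2).symm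
    have hsplit2 : (∫ u in U..U + 2*π*(n+1:ℕ), u ^ (-κ) * oscF γ u) =
        (∫ u in U..U + 2*π*n, u ^ (-κ) * oscF γ u) +
        ∫ u in (U + 2*π*n)..(U + 2*π*(n+1:ℕ)), u ^ (-κ) * oscF γ u :=
      (intervalIntegral.integral_add_adjacent_intervals hIfull1 hIfull2).symm
    have hper : oscM γ / (4 * π) * ∫ u in (U + 2*π*n)..(U + 2*π*(n+1:ℕ)), u ^ (-κ) ≤
        ∫ u in (U + 2*π*n)..(U + 2*π*(n+1:ℕ)), u ^ (-κ) * oscF γ u := by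
      have ha1 : 1 ≤ U + 2*π*n := by linarith
      have ha2 : 72 * π ^ 2 * κ / oscM γ ≤ U + 2*π*n := by linarith
      have heq : U + 2*π*(n+1:ℕ) = (U + 2*π*n) + 2*π := by push_cast; ring
      rw [heq]
      exact per_period hγ1 hγ2 hκ ha1 ha2
    rw [hsplit1, hsplit2, mul_add]
    exact add_le_add ih hper

lemma tail_integrable {q : ℝ} (hq : q < -1) {V : ℝ} (hV : 0 < V) {G : ℝ → ℝ}
    (hG : Continuous G) (hGb : ∀ u, |G u| ≤ 9) :
    IntegrableOn (fun u : ℝ => u ^ q * G u) (Set.Ioi V) := by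
  have hg : IntegrableOn (fun u : ℝ => 9 * u ^ q) (Set.Ioi V) :=
    (integrableOn_Ioi_rpow_of_lt hq hV).const_mul 9
  refine Integrable.mono' hg ?_ ?_
  · refine ContinuousOn.aestronglyMeasurable ?_ measurableSet_Ioi
    intro u hu
    exact ((Real.continuousAt_rpow_const u q
      (Or.inl (lt_trans hV hu).ne')).continuousWithinAt).mul hG.continuousWithinAt
  · filter_upwards [ae_restrict_mem measurableSet_Ioi] with u hu
    have hu0 : 0 < u := lt_trans hV hu
    rw [Real.norm_eq_abs, abs_mul, abs_of_pos (Real.rpow_pos_of_pos hu0 q)]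
    nlinarith [hGb u, abs_nonneg (G u), Real.rpow_pos_of_pos hu0 q]

lemma tail_bound {q : ℝ} (hq : q < -1) {V : ℝ} (hV : 0 < V) {G : ℝ → ℝ}
    (hG : Continuous G) (hGb : ∀ u, |G u| ≤ 9) :
    |∫ u in Set.Ioi V, u ^ q * G u| ≤ 9 * (-V ^ (q + 1) / (q + 1)) := by
  have hg : IntegrableOn (fun u : ℝ => 9 * u ^ q) (Set.Ioi V) :=
    (integrableOn_Ioi_rpow_of_lt hq hV).const_mul 9
  have hb : ∀ᵐ u ∂(volume.restrict (Set.Ioi V)), ‖u ^ q * G u‖ ≤ 9 * u ^ q := by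
    filter_upwards [ae_restrict_mem measurableSet_Ioi] with u hu
    have hu0 : 0 < u := lt_trans hV hu
    rw [Real.norm_eq_abs, abs_mul, abs_of_pos (Real.rpow_pos_of_pos hu0 q)]
    nlinarith [hGb u, abs_nonneg (G u), Real.rpow_pos_of_pos hu0 q]
  have := MeasureTheory.norm_integral_le_of_norm_le hg hb
  rw [Real.norm_eq_abs] at this
  calc |∫ u in Set.Ioi V, u ^ q * G u| ≤ ∫ u in Set.Ioi V, 9 * u ^ q := this
    _ = 9 * ∫ u in Set.Ioi V, u ^ q := by rw [MeasureTheory.integral_const_mul]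
    _ = 9 * (-V ^ (q + 1) / (q + 1)) := by rw [integral_Ioi_rpow_of_lt hq hV]

lemma split_Ioi {f : ℝ → ℝ} {U V : ℝ} (hUV : U ≤ V)
    (hf : IntegrableOn f (Set.Ioi U)) :
    (∫ u in Set.Ioi U, f u) = (∫ u in U..V, f u) + ∫ u in Set.Ioi V, f u := by
  have h1 : IntegrableOn f (Set.Ioc U V) :=
    hf.mono_set (fun x hx => hx.1)
  have h2 : IntegrableOn f (Set.Ioi V) :=
    hf.mono_set (Set.Ioi_subset_Ioi hUV)
  rw [intervalIntegral.integral_of_le hUV, ← MeasureTheory.setIntegral_union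
    (Set.Ioc_disjoint_Ioi le_rfl) measurableSet_Ioi h1 h2, Set.Ioc_union_Ioi_eq_Ioi hUV]

/-- Main lower bound for the tail oscillatory integral. -/
lemma psi_lower {γ κ : ℝ} (hγ1 : 1 ≤ γ) (hγ2 : γ ≤ 2) (hκ : 1 < κ) {U : ℝ}
    (hU1 : 1 ≤ U) (hU2 : 72 * π ^ 2 * κ / oscM γ ≤ U) :
    oscM γ / (4 * π * (κ - 1)) * U ^ (1 - κ) ≤
      ∫ u in Set.Ioi U, u ^ (-κ) * oscF γ u := by
  have hπ := Real.pi_pos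
  have hU0 : (0:ℝ) < U := lt_of_lt_of_le one_pos hU1
  have hm := oscM_pos (show (0:ℝ) < γ by linarith)
  have hcont : Continuous (oscF γ) := oscF_continuous γ (by linarith)
  have hq : -κ < -1 := by linarith
  have hInt : IntegrableOn (fun u : ℝ => u ^ (-κ) * oscF γ u) (Set.Ioi U) :=
    tail_integrable hq hU0 hcont (oscF_bound (by linarith) hγ2)
  set Ψ : ℝ → ℝ := fun V => ∫ u in Set.Ioi V, u ^ (-κ) * oscF γ u with hΨ
  -- sequence of lower bounds
  have key : ∀ N : ℕ, oscM γ / (4 * π) *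
      (((U + 2*π*N) ^ (-κ+1) - U ^ (-κ+1)) / (-κ+1)) + Ψ (U + 2*π*N) ≤ Ψ U := by
    intro N
    have hVN : U ≤ U + 2*π*N := by
      have : (0:ℝ) ≤ 2*π*N := by positivity
      linarith
    have hsplit := split_Ioi hVN hInt
    have hacc := accumulate_periods hγ1 hγ2 hκ hU1 hU2 N
    have hval : (∫ u in U..U + 2*π*N, u ^ (-κ)) =
        ((U + 2*π*N) ^ (-κ+1) - U ^ (-κ+1)) / (-κ+1) := by
      apply integral_rpow
      refine Or.inr ⟨by linarith, ?_⟩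
      rw [Set.uIcc_of_le hVN]
      intro hmem
      exact absurd hmem.1 (by linarith)
    rw [hval] at hacc
    rw [hΨ]
    simp only
    rw [hsplit]
    exact add_le_add hacc le_rfl
  -- limits
  have hVtend : Filter.Tendsto (fun N : ℕ => U + 2*π*N) Filter.atTop Filter.atTop := by
    apply Filter.tendsto_atTop_add_const_left
    exact (Filter.tendsto_id.const_mul_atTop (by positivity)).comp
      tendsto_natCast_atTop_atTop
  have hpow_tend : Filter.Tendsto (fun N : ℕ => (U + 2*π*N) ^ (-κ+1))
      Filter.atTop (nhds 0) := by
    have h1 : Filter.Tendsto (fun x : ℝ => x ^ (-(κ-1))) Filter.atTop (nhds 0) :=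
      tendsto_rpow_neg_atTop (by linarith)
    have : (fun N : ℕ => (U + 2*π*N) ^ (-κ+1)) =
        (fun x : ℝ => x ^ (-(κ-1))) ∘ (fun N : ℕ => U + 2*π*N) := by
      funext N; simp only [Function.comp_apply]; congr 1; ring
    rw [this]
    exact h1.comp hVtend
  have hΨ_tend : Filter.Tendsto (fun N : ℕ => Ψ (U + 2*π*N)) Filter.atTop (nhds 0) := by
    apply squeeze_zero_norm (a := fun N : ℕ => 9 * ((U + 2*π*N) ^ (-κ+1) / (κ - 1)))
    · intro N
      have hV0 : (0:ℝ) < U + 2*π*N := by positivity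
      have := tail_bound hq hV0 hcont (oscF_bound (by linarith) hγ2)
      rw [Real.norm_eq_abs]
      have hrw : (9:ℝ) * (-(U + 2*π*N) ^ (-κ+1) / (-κ+1)) =
          9 * ((U + 2*π*N) ^ (-κ+1) / (κ - 1)) := by
        rw [show ((-κ+1):ℝ) = -(κ-1) by ring, div_neg, neg_div, neg_neg]
      calc |Ψ (U + 2*π*N)| ≤ 9 * (-(U + 2*π*N) ^ (-κ+1) / (-κ+1)) := this
        _ = 9 * ((U + 2*π*N) ^ (-κ+1) / (κ - 1)) := hrw
    · have : Filter.Tendsto (fun N : ℕ => (U + 2*π*N) ^ (-κ+1) / (κ-1))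
          Filter.atTop (nhds (0 / (κ-1))) := hpow_tend.div_const _
      rw [zero_div] at this
      simpa using this.const_mul 9
  have hlim : Filter.Tendsto (fun N : ℕ => oscM γ / (4 * π) *
      (((U + 2*π*N) ^ (-κ+1) - U ^ (-κ+1)) / (-κ+1)) + Ψ (U + 2*π*N))
      Filter.atTop (nhds (oscM γ / (4 * π) * ((0 - U ^ (-κ+1)) / (-κ+1)) + 0)) := by
    exact (((hpow_tend.sub_const _).div_const _).const_mul _).add hΨ_tend
  have hfinal : oscM γ / (4 * π) * ((0 - U ^ (-κ+1)) / (-κ+1)) + 0 ≤ Ψ U :=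
    le_of_tendsto hlim (Filter.Eventually.of_forall key)
  have hκ0 : (κ - 1) ≠ 0 := by linarith
  have hπ0 : (π:ℝ) ≠ 0 := hπ.ne'
  calc oscM γ / (4 * π * (κ - 1)) * U ^ (1 - κ)
      = oscM γ / (4 * π) * ((0 - U ^ (-κ+1)) / (-κ+1)) + 0 := by
        rw [show ((1 - κ):ℝ) = -κ+1 by ring, show ((-κ+1):ℝ) = -(κ-1) by ring,
          zero_sub, neg_div_neg_eq]
        rw [show ((-(κ-1)):ℝ) = -κ+1 by ring]
        field_simp
        ring
    _ ≤ Ψ U := hfinal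

lemma deriv_osc {β ρ : ℝ} (hβ : 0 < β) (hρ : 0 < ρ) {x₁ : ℝ → ℝ}
    (hx₁ : ∀ s : ℝ, 0 < s → x₁ s = s ^ β * Real.cos (s ^ (-ρ)))
    {s : ℝ} (hs : 0 < s) :
    deriv x₁ s = β * s ^ (β-1) * Real.cos (s ^ (-ρ)) +
      ρ * s ^ (β-ρ-1) * Real.sin (s ^ (-ρ)) := by
  have hev : x₁ =ᶠ[nhds s] (fun v => v ^ β * Real.cos (v ^ (-ρ))) := by
    filter_upwards [isOpen_Ioi.mem_nhds (show s ∈ Set.Ioi (0:ℝ) from hs)] with v hv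
    exact hx₁ v hv
  rw [hev.deriv_eq]
  have h1 : HasDerivAt (fun v : ℝ => v ^ β) (β * s ^ (β-1)) s :=
    Real.hasDerivAt_rpow_const (Or.inl hs.ne')
  have h2 : HasDerivAt (fun v : ℝ => v ^ (-ρ)) (-ρ * s ^ (-ρ-1)) s := by
    have := Real.hasDerivAt_rpow_const (x := s) (p := -ρ) (Or.inl hs.ne')
    convert this using 2
  have h3 : HasDerivAt (fun v : ℝ => Real.cos (v ^ (-ρ)))
      (-Real.sin (s ^ (-ρ)) * (-ρ * s ^ (-ρ-1))) s :=
    (Real.hasDerivAt_cos _).comp s h2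
  have h4 := (h1.mul h3).deriv
  rw [show (fun v : ℝ => v ^ β * Real.cos (v ^ (-ρ))) =
      (fun v : ℝ => v ^ β) * (fun v => Real.cos (v ^ (-ρ))) from rfl, h4]
  have e : s ^ β * s ^ (-ρ-1) = s ^ (β-ρ-1) := by
    rw [← Real.rpow_add hs]; congr 1; ring
  linear_combination (ρ * Real.sin (s ^ (-ρ))) * e

lemma cov_integral {γ β ρ : ℝ} (hγ0 : 0 ≤ γ) (hβ : 0 < β) (hρ : 0 < ρ) {t : ℝ} (ht : 0 < t)
    {x₁ x₂ : ℝ → ℝ}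
    (hx₁ : ∀ s : ℝ, 0 < s → x₁ s = s ^ β * Real.cos (s ^ (-ρ)))
    (hx₂ : ∀ s : ℝ, 0 < s → x₂ s = s ^ β * (2 + Real.sin (s ^ (-ρ)))) :
    (∫ s in Set.Ioc (0:ℝ) t, (x₂ s) ^ γ * deriv x₁ s) =
      ∫ u in Set.Ioi (t ^ (-ρ)),
        (u ^ (-(β*(γ+1)/ρ)) * oscF γ u +
          (β/ρ) * (u ^ (-(β*(γ+1)/ρ) - 1) * ((2 + Real.sin u) ^ γ * Real.cos u))) := by
  set κ := β*(γ+1)/ρ with hκdef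
  set φ : ℝ → ℝ := fun u => u ^ (-κ) * oscF γ u +
    (β/ρ) * (u ^ (-κ - 1) * ((2 + Real.sin u) ^ γ * Real.cos u)) with hφ
  have himg : (fun s : ℝ => s ^ (-ρ)) '' (Set.Ioc 0 t) = Set.Ici (t ^ (-ρ)) := by
    ext u
    constructor
    · rintro ⟨s, ⟨hs0, hst⟩, rfl⟩
      exact Real.rpow_le_rpow_of_nonpos hs0 hst (by linarith)
    · intro hu
      have htρ : (0:ℝ) < t ^ (-ρ) := Real.rpow_pos_of_pos ht _
      have hu0 : (0:ℝ) < u := lt_of_lt_of_le htρ hu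
      refine ⟨u ^ (-ρ⁻¹), ⟨Real.rpow_pos_of_pos hu0 _, ?_⟩, ?_⟩
      · calc u ^ (-ρ⁻¹) ≤ (t ^ (-ρ)) ^ (-ρ⁻¹) :=
            Real.rpow_le_rpow_of_nonpos htρ hu
              (neg_nonpos.mpr (inv_nonneg.mpr hρ.le))
          _ = t := by
            rw [← Real.rpow_mul ht.le, show ((-ρ)*(-ρ⁻¹):ℝ) = 1 by
              field_simp, Real.rpow_one]
      · show (u ^ (-ρ⁻¹)) ^ (-ρ) = u
        rw [← Real.rpow_mul hu0.le, show ((-ρ⁻¹)*(-ρ):ℝ) = 1 by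
          field_simp, Real.rpow_one]
  have hinj : Set.InjOn (fun s : ℝ => s ^ (-ρ)) (Set.Ioc 0 t) := by
    intro a ha b hb hab
    by_contra hne
    rcases lt_or_gt_of_ne hne with h | h
    · exact absurd hab (ne_of_gt (Real.rpow_lt_rpow_of_neg ha.1 h (by linarith)))
    · exact absurd hab (ne_of_lt (Real.rpow_lt_rpow_of_neg hb.1 h (by linarith)))
  have hcv := integral_image_eq_integral_abs_deriv_smul (f := fun s : ℝ => s ^ (-ρ))
    (f' := fun s : ℝ => -ρ * s ^ (-ρ-1)) measurableSet_Ioc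
    (fun s hs => by
      have := Real.hasDerivAt_rpow_const (x := s) (p := -ρ) (Or.inl hs.1.ne')
      have h2 : HasDerivAt (fun v : ℝ => v ^ (-ρ)) (-ρ * s ^ (-ρ-1)) s := by
        convert this using 2
      exact h2.hasDerivWithinAt) hinj φ
  rw [himg] at hcv
  rw [MeasureTheory.integral_Ici_eq_integral_Ioi] at hcv
  refine Eq.trans (MeasureTheory.setIntegral_congr_fun measurableSet_Ioc ?_) hcv.symm
  intro s hs
  have hs0 : (0:ℝ) < s := hs.1
  have hsin := two_add_sin_pos (s ^ (-ρ))
  have hx2 : (x₂ s) ^ γ = s ^ (β*γ) * (2 + Real.sin (s ^ (-ρ))) ^ γ := by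
    rw [hx₂ s hs0, Real.mul_rpow (Real.rpow_nonneg hs0.le β) hsin.le,
      ← Real.rpow_mul hs0.le]
  have hder := deriv_osc hβ hρ hx₁ hs0
  have habs : |(-ρ * s ^ (-ρ-1))| = ρ * s ^ (-ρ-1) := by
    rw [abs_mul, abs_of_neg (by linarith : (-ρ:ℝ) < 0),
      abs_of_pos (Real.rpow_pos_of_pos hs0 _), neg_neg]
  have hp1 : (s ^ (-ρ)) ^ (-κ) = s ^ (β*(γ+1)) := by
    rw [← Real.rpow_mul hs0.le]
    congr 1
    field_simp [hκdef]
    rw [hκdef]; field_simp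
  have hp2 : (s ^ (-ρ)) ^ (-κ-1) = s ^ (β*(γ+1)+ρ) := by
    rw [← Real.rpow_mul hs0.le]
    congr 1
    rw [hκdef]
    field_simp
    ring
  have k1 : s ^ (-ρ-1) * s ^ (β*(γ+1)) = s ^ (β*γ) * s ^ (β-ρ-1) := by
    rw [← Real.rpow_add hs0, ← Real.rpow_add hs0]; congr 1; ring
  have k2 : s ^ (-ρ-1) * s ^ (β*(γ+1)+ρ) = s ^ (β*γ) * s ^ (β-1) := by
    rw [← Real.rpow_add hs0, ← Real.rpow_add hs0]; congr 1; ring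
  have hρ0 : (ρ:ℝ) ≠ 0 := hρ.ne'
  show (x₂ s) ^ γ * deriv x₁ s = |(-ρ * s ^ (-ρ-1))| • φ (s ^ (-ρ))
  rw [hx2, hder, habs, hφ, smul_eq_mul]
  simp only [hp1, hp2, oscF]
  have hρβ : ρ * (β / ρ) = β := by field_simp
  linear_combination (-(ρ * (2 + Real.sin (s ^ (-ρ))) ^ γ * Real.sin (s ^ (-ρ)))) * k1 +
    (-(β * (2 + Real.sin (s ^ (-ρ))) ^ γ * Real.cos (s ^ (-ρ)))) * k2 +
    (-(s ^ (-ρ-1) * s ^ (β*(γ+1)+ρ) * (2 + Real.sin (s ^ (-ρ))) ^ γ * Real.cos (s ^ (-ρ)))) * hρβ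

lemma part3 {γ p β ρ : ℝ} (hγ : 1 < γ) (hγp : γ < p) (hp : p < 2)
    (hβ : 0 < β) (hρ : 0 < ρ) (h₁ : γ < ρ / β) (h₃ : (ρ + 1) / β < p)
    {x₁ x₂ : ℝ → ℝ}
    (hx₁ : ∀ t : ℝ, 0 < t → x₁ t = t ^ β * Real.cos (t ^ (-ρ)))
    (hx₂ : ∀ t : ℝ, 0 < t → x₂ t = t ^ β * (2 + Real.sin (t ^ (-ρ)))) :
    (∃ c > 0, ∃ T > 0, ∀ t : ℝ, 0 < t → t ≤ T →
      (∫ s in Set.Ioc (0 : ℝ) t, (x₂ s) ^ γ * deriv x₁ s)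
          ≥ c * t ^ (β * (γ + 1) - ρ) ∧
      c * t ^ (β * (γ + 1) - ρ) ≥ 3 * t ^ β ∧
      3 * t ^ β ≥ x₂ t) := by
  have hπ := Real.pi_pos
  have hγ0 : (0:ℝ) < γ := by linarith
  have hγ2 : γ ≤ 2 := by linarith
  have hβγρ : β * γ < ρ := by
    rw [lt_div_iff₀ hβ] at h₁; linarith
  have hρβ : ρ + 1 < 2 * β := by
    have := (div_lt_iff₀ hβ).1 (h₃.trans hp); linarith
  set κ := β * (γ + 1) / ρ with hκdef
  have hρκ : ρ * κ = β * (γ + 1) := by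
    rw [hκdef]; field_simp
  have hκ : 1 < κ := by
    rw [hκdef, lt_div_iff₀ hρ]
    nlinarith
  have hκ0 : (0:ℝ) < κ := by linarith
  have hm := oscM_pos hγ0
  set c₁ := oscM γ / (4 * π * (κ - 1)) with hc₁def
  have hc₁ : 0 < c₁ := by
    rw [hc₁def]
    exact div_pos hm (mul_pos (by positivity) (by linarith))
  set c := c₁ / 2 with hcdef
  have hc : 0 < c := by rw [hcdef]; linarith
  set d := ρ - β * γ with hddef
  have hd : 0 < d := by rw [hddef]; linarith
  set W := max 1 (max (72 * π ^ 2 * κ / oscM γ) (18 * β / (ρ * κ * c₁))) with hWdef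
  have hW1 : (1:ℝ) ≤ W := le_max_left _ _
  have hW0 : (0:ℝ) < W := by linarith
  set T := min (W ^ (-ρ⁻¹)) ((c / 3) ^ d⁻¹) with hTdef
  have hT : 0 < T := by
    apply lt_min
    · exact Real.rpow_pos_of_pos hW0 _
    · exact Real.rpow_pos_of_pos (by positivity) _
  refine ⟨c, hc, T, hT, ?_⟩
  intro t ht0 htT
  have hIeq := cov_integral hγ0.le hβ hρ ht0 hx₁ hx₂
  set U := t ^ (-ρ) with hUdef
  have hU0 : (0:ℝ) < U := Real.rpow_pos_of_pos ht0 _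
  have hUW : W ≤ U := by
    have h1 : t ≤ W ^ (-ρ⁻¹) := le_trans htT (min_le_left _ _)
    have h2 : (W ^ (-ρ⁻¹)) ^ (-ρ) ≤ t ^ (-ρ) :=
      Real.rpow_le_rpow_of_nonpos ht0 h1 (by linarith)
    have h3 : (W ^ (-ρ⁻¹)) ^ (-ρ) = W := by
      rw [← Real.rpow_mul hW0.le, show ((-ρ⁻¹) * (-ρ) : ℝ) = 1 by field_simp,
        Real.rpow_one]
    rw [hUdef]; rw [h3] at h2; exact h2
  have hU1 : (1:ℝ) ≤ U := le_trans hW1 hUW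
  have hU0' : (0:ℝ) < U := by linarith
  have hU2 : 72 * π ^ 2 * κ / oscM γ ≤ U :=
    le_trans (le_trans (le_max_left _ _) (le_max_right 1 _)) hUW
  have hU3 : 18 * β / (ρ * κ * c₁) ≤ U :=
    le_trans (le_trans (le_max_right _ _) (le_max_right 1 _)) hUW
  -- split the integral
  have hcont1 : Continuous (oscF γ) := oscF_continuous γ hγ0.le
  have hcont2 : Continuous (fun u => (2 + Real.sin u) ^ γ * Real.cos u) :=
    oscG_continuous γ hγ0.le
  have hq1 : -κ < -1 := by linarith
  have hq2 : -κ - 1 < -1 := by linarith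
  have hInt1 : IntegrableOn (fun u : ℝ => u ^ (-κ) * oscF γ u) (Set.Ioi U) :=
    tail_integrable hq1 hU0' hcont1 (oscF_bound hγ0.le hγ2)
  have hInt2 : IntegrableOn (fun u : ℝ => u ^ (-κ - 1) *
      ((2 + Real.sin u) ^ γ * Real.cos u)) (Set.Ioi U) :=
    tail_integrable hq2 hU0' hcont2 (oscG_bound hγ0.le hγ2)
  have hsplit : (∫ u in Set.Ioi U,
      (u ^ (-κ) * oscF γ u +
        (β/ρ) * (u ^ (-κ - 1) * ((2 + Real.sin u) ^ γ * Real.cos u)))) =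
      (∫ u in Set.Ioi U, u ^ (-κ) * oscF γ u) +
      (β/ρ) * ∫ u in Set.Ioi U, u ^ (-κ - 1) * ((2 + Real.sin u) ^ γ * Real.cos u) := by
    rw [MeasureTheory.integral_add hInt1 (hInt2.const_mul (β/ρ))]
    congr 1
    exact MeasureTheory.integral_const_mul _ _
  -- lower bound for main term
  have hψ := psi_lower hγ.le hγ2 hκ hU1 hU2
  -- error bound
  have herr : |∫ u in Set.Ioi U, u ^ (-κ - 1) * ((2 + Real.sin u) ^ γ * Real.cos u)| ≤
      9 * (U ^ (-κ) / κ) := by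
    have := tail_bound hq2 hU0' hcont2 (oscG_bound hγ0.le hγ2)
    calc |∫ u in Set.Ioi U, u ^ (-κ - 1) * ((2 + Real.sin u) ^ γ * Real.cos u)| ≤
          9 * (-U ^ (-κ - 1 + 1) / (-κ - 1 + 1)) := this
      _ = 9 * (U ^ (-κ) / κ) := by
          rw [show (-κ - 1 + 1 : ℝ) = -(κ) by ring]
          rw [div_neg, neg_div, neg_neg]
  -- the error is at most (c₁/2) U^(1-κ)
  have hX : (0:ℝ) < U ^ (1 - κ) := Real.rpow_pos_of_pos hU0' _
  have hUκ : U ^ (-κ) = U⁻¹ * U ^ (1 - κ) := by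
    rw [← Real.rpow_neg_one U, ← Real.rpow_add hU0']
    congr 1; ring
  have hU3' : 18 * β ≤ U * (ρ * κ * c₁) := by
    rw [div_le_iff₀ (by positivity)] at hU3; linarith
  have hs1 : (β/ρ) * (9 * (U⁻¹ * U ^ (1 - κ) / κ)) ≤ c₁ / 2 * U ^ (1 - κ) := by
    have hcore : (β/ρ) * 9 * U⁻¹ / κ ≤ c₁ / 2 := by
      rw [div_le_div_iff₀ hκ0 two_pos]
      calc β / ρ * 9 * U⁻¹ * 2 = 18 * β * (ρ⁻¹ * U⁻¹) := by ring
        _ ≤ (U * (ρ * κ * c₁)) * (ρ⁻¹ * U⁻¹) :=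
            mul_le_mul_of_nonneg_right hU3' (by positivity)
        _ = c₁ * κ * ((ρ * ρ⁻¹) * (U * U⁻¹)) := by ring
        _ = c₁ * κ := by
            rw [mul_inv_cancel₀ hρ.ne', mul_inv_cancel₀ hU0'.ne']; ring
    calc (β/ρ) * (9 * (U⁻¹ * U ^ (1 - κ) / κ)) =
          ((β/ρ) * 9 * U⁻¹ / κ) * U ^ (1 - κ) := by ring
      _ ≤ (c₁ / 2) * U ^ (1 - κ) := mul_le_mul_of_nonneg_right hcore hX.le
  -- main lower bound
  have hmain : (∫ s in Set.Ioc (0 : ℝ) t, (x₂ s) ^ γ * deriv x₁ s) ≥ c * U ^ (1 - κ) := by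
    rw [hIeq]
    have : (∫ u in Set.Ioi U, u ^ (-(β * (γ + 1) / ρ)) * oscF γ u +
        β / ρ * (u ^ (-(β * (γ + 1) / ρ) - 1) * ((2 + Real.sin u) ^ γ * Real.cos u))) =
        (∫ u in Set.Ioi U, u ^ (-κ) * oscF γ u) +
        (β/ρ) * ∫ u in Set.Ioi U, u ^ (-κ - 1) * ((2 + Real.sin u) ^ γ * Real.cos u) := hsplit
    rw [this]
    have hb1 : c₁ * U ^ (1 - κ) ≤ ∫ u in Set.Ioi U, u ^ (-κ) * oscF γ u := by
      rw [hc₁def]; exact hψ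
    have hb2 : (β/ρ) * ∫ u in Set.Ioi U, u ^ (-κ - 1) *
        ((2 + Real.sin u) ^ γ * Real.cos u) ≥ -(c₁ / 2 * U ^ (1 - κ)) := by
      have h1 : (β/ρ) * ∫ u in Set.Ioi U, u ^ (-κ - 1) *
          ((2 + Real.sin u) ^ γ * Real.cos u) ≥
          -((β/ρ) * (9 * (U ^ (-κ) / κ))) := by
        have hβρ0 : (0:ℝ) ≤ β/ρ := by positivity
        have hA : -((β/ρ) * |∫ u in Set.Ioi U, u ^ (-κ - 1) *
            ((2 + Real.sin u) ^ γ * Real.cos u)|) ≤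
            (β/ρ) * ∫ u in Set.Ioi U, u ^ (-κ - 1) *
            ((2 + Real.sin u) ^ γ * Real.cos u) := by
          have := mul_le_mul_of_nonneg_left (neg_abs_le (∫ u in Set.Ioi U, u ^ (-κ - 1) *
            ((2 + Real.sin u) ^ γ * Real.cos u))) hβρ0
          rwa [mul_neg] at this
        have hB := mul_le_mul_of_nonneg_left herr hβρ0
        linarith
      have h2 : (β/ρ) * (9 * (U ^ (-κ) / κ)) ≤ c₁ / 2 * U ^ (1 - κ) := by
        rw [hUκ]; exact hs1
      linarith
    have : c * U ^ (1 - κ) = c₁ * U ^ (1 - κ) - c₁ / 2 * U ^ (1 - κ) := by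
      rw [hcdef]; ring
    linarith
  have hUt : U ^ (1 - κ) = t ^ (β * (γ + 1) - ρ) := by
    rw [hUdef, ← Real.rpow_mul ht0.le]
    congr 1
    linear_combination hρκ
  constructor
  · rw [← hUt]; exact hmain
  constructor
  · -- c * t^(β(γ+1)-ρ) ≥ 3 t^β
    have htd : t ≤ (c / 3) ^ d⁻¹ := le_trans htT (min_le_right _ _)
    have h2 : ((c / 3) ^ d⁻¹) ^ (-d) ≤ t ^ (-d) :=
      Real.rpow_le_rpow_of_nonpos ht0 htd (by linarith)
    have h3 : ((c / 3) ^ d⁻¹) ^ (-d) = 3 / c := by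
      rw [← Real.rpow_mul (by positivity : (0:ℝ) ≤ c / 3),
        show (d⁻¹ * (-d) : ℝ) = -1 by field_simp, Real.rpow_neg_one]
      rw [inv_div]
    have h4 : 3 / c ≤ t ^ (-d) := by rw [← h3]; exact h2
    have h5 : t ^ (β * (γ + 1) - ρ) = t ^ β * t ^ (-d) := by
      rw [← Real.rpow_add ht0]
      congr 1
      rw [hddef]; ring
    have htβ : (0:ℝ) < t ^ β := Real.rpow_pos_of_pos ht0 β
    rw [h5]
    have hmul := mul_le_mul_of_nonneg_left h4 (show (0:ℝ) ≤ c * t ^ β by positivity)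
    calc c * (t ^ β * t ^ (-d)) = (c * t ^ β) * t ^ (-d) := by ring
      _ ≥ (c * t ^ β) * (3 / c) := hmul
      _ = 3 * t ^ β * (c / c) := by ring
      _ = 3 * t ^ β := by rw [div_self hc.ne']; ring
  · -- 3 t^β ≥ x₂ t
    rw [hx₂ t ht0]
    have htβ : (0:ℝ) < t ^ β := Real.rpow_pos_of_pos ht0 β
    nlinarith [Real.sin_le_one (t ^ (-ρ))]

lemma sin_lip (u v : ℝ) : |Real.sin u - Real.sin v| ≤ 1 * |u - v| := by
  rw [Real.sin_sub_sin, one_mul]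
  have h1 : |Real.sin ((u - v)/2)| ≤ |u - v|/2 := by
    have := Real.abs_sin_le_abs (x := (u - v)/2)
    calc |Real.sin ((u - v)/2)| ≤ |(u - v)/2| := this
      _ = |u - v|/2 := by rw [abs_div]; norm_num
  have h2 : |Real.cos ((u + v)/2)| ≤ 1 := Real.abs_cos_le_one _
  rw [abs_mul, abs_mul]
  have h3 : |(2:ℝ)| = 2 := by norm_num
  rw [h3]
  nlinarith [abs_nonneg (Real.sin ((u-v)/2)), abs_nonneg (Real.cos ((u+v)/2))]

lemma cos_lip (u v : ℝ) : |Real.cos u - Real.cos v| ≤ 1 * |u - v| := by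
  rw [Real.cos_sub_cos, one_mul]
  have h1 : |Real.sin ((u - v)/2)| ≤ |u - v|/2 := by
    have := Real.abs_sin_le_abs (x := (u - v)/2)
    calc |Real.sin ((u - v)/2)| ≤ |(u - v)/2| := this
      _ = |u - v|/2 := by rw [abs_div]; norm_num
  have h2 : |Real.sin ((u + v)/2)| ≤ 1 := Real.abs_sin_le_one _
  rw [abs_mul, abs_mul]
  have h3 : |(-2:ℝ)| = 2 := by norm_num
  rw [h3]
  nlinarith [abs_nonneg (Real.sin ((u-v)/2)), abs_nonneg (Real.sin ((u+v)/2))]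


/-- Key estimates for Example 1 of the paper (non-uniqueness when `γ < p`): the
oscillatory paths `x¹(t) = t^β cos(t^{-ρ})`, `x²(t) = t^β(2 + sin(t^{-ρ}))` are
`(1/p)`-Hölder on `[0,1]`, `x² > 0` for `t > 0`, and for small `t`,
`∫₀ᵗ (x²)^γ dx¹ ≥ c·t^{β(γ+1)-ρ} ≥ 3t^β ≥ x²(t)` (the integral written as a
Lebesgue integral against the derivative of `x¹`, which is smooth on `(0,1]`). -/
theorem example_one_estimates (γ p β ρ : ℝ)
    (hγ : 1 < γ) (hγp : γ < p) (hp : p < 2)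
    (hβ : 0 < β) (hρ : 0 < ρ)
    (h₁ : γ < ρ / β) (h₂ : ρ / β < (ρ + 1) / β) (h₃ : (ρ + 1) / β < p)
    (x₁ x₂ : ℝ → ℝ)
    (hx₁ : ∀ t : ℝ, 0 < t → x₁ t = t ^ β * Real.cos (t ^ (-ρ)))
    (hx₂ : ∀ t : ℝ, 0 < t → x₂ t = t ^ β * (2 + Real.sin (t ^ (-ρ))))
    (hx₁0 : x₁ 0 = 0) (hx₂0 : x₂ 0 = 0) :
    (∃ C > 0, ∀ s ∈ Set.Icc (0 : ℝ) 1, ∀ t ∈ Set.Icc (0 : ℝ) 1,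
      |x₁ s - x₁ t| ≤ C * |s - t| ^ (1 / p) ∧
      |x₂ s - x₂ t| ≤ C * |s - t| ^ (1 / p)) ∧
    (∀ t : ℝ, 0 < t → 0 < x₂ t) ∧
    (∃ c > 0, ∃ T > 0, ∀ t : ℝ, 0 < t → t ≤ T →
      (∫ s in Set.Ioc (0 : ℝ) t, (x₂ s) ^ γ * deriv x₁ s)
          ≥ c * t ^ (β * (γ + 1) - ρ) ∧
      c * t ^ (β * (γ + 1) - ρ) ≥ 3 * t ^ β ∧
      3 * t ^ β ≥ x₂ t) := by
  refine ⟨?_, ?_, part3 hγ hγp hp hβ hρ h₁ h₃ hx₁ hx₂⟩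
  · -- Hölder continuity
    have hp1 : 1 < p := lt_trans hγ hγp
    have hp0 : 0 < p := by linarith
    have hα : 0 < 1/p := by positivity
    have hα1 : 1/p ≤ 1 := by rw [div_le_one hp0]; linarith
    have hαβ : (1/p) * (ρ + 1) ≤ β := by
      have h := (div_lt_iff₀ hβ).1 h₃
      rw [div_mul_eq_mul_div, one_mul, div_le_iff₀ hp0]
      nlinarith
    have hx₁' : ∀ z : ℝ, 0 ≤ z → x₁ z = z ^ β * Real.cos (z ^ (-ρ)) := by
      intro z hz
      rcases eq_or_lt_of_le hz with rfl | hz0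
      · rw [hx₁0, Real.zero_rpow hβ.ne', zero_mul]
      · exact hx₁ z hz0
    have hx₂' : ∀ z : ℝ, 0 ≤ z → x₂ z = z ^ β * (2 + Real.sin (z ^ (-ρ))) := by
      intro z hz
      rcases eq_or_lt_of_le hz with rfl | hz0
      · rw [hx₂0, Real.zero_rpow hβ.ne', zero_mul]
      · exact hx₂ z hz0
    set C : ℝ := 3 * (β + 2) + 2 * 3 + 1 * ρ with hCdef
    have hC0 : 0 < C := by rw [hCdef]; nlinarith
    refine ⟨C, hC0, ?_⟩
    have key : ∀ a b : ℝ, a ∈ Set.Icc (0:ℝ) 1 → b ∈ Set.Icc (0:ℝ) 1 → a ≤ b →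
        |x₁ b - x₁ a| ≤ C * (b - a) ^ (1/p) ∧
        |x₂ b - x₂ a| ≤ C * (b - a) ^ (1/p) := by
      intro a b ha hb hab
      have hX : (0:ℝ) ≤ (b - a) ^ (1/p) := Real.rpow_nonneg (by linarith [hab]) _
      constructor
      · have h1 := osc_holder (M := 1) (L := 1) (F := Real.cos) hβ hρ hα hα1 hαβ
          zero_le_one zero_le_one (fun u => Real.abs_cos_le_one u)
          (fun u v => cos_lip u v) ha.1 hab hb.2
        rw [← hx₁' a ha.1, ← hx₁' b hb.1] at h1
        calc |x₁ b - x₁ a| ≤ (1 * (β + 2) + 2 * 1 + 1 * ρ) * (b - a) ^ (1/p) := h1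
          _ ≤ C * (b - a) ^ (1/p) := by
              apply mul_le_mul_of_nonneg_right _ hX
              rw [hCdef]; nlinarith
      · have hFM : ∀ u : ℝ, |2 + Real.sin u| ≤ 3 := by
          intro u
          rw [abs_le]
          constructor <;> nlinarith [Real.neg_one_le_sin u, Real.sin_le_one u]
        have hFL : ∀ u v : ℝ, |(2 + Real.sin u) - (2 + Real.sin v)| ≤ 1 * |u - v| := by
          intro u v
          rw [show (2 + Real.sin u) - (2 + Real.sin v) = Real.sin u - Real.sin v by ring]
          exact sin_lip u v
        have h2 := osc_holder (M := 3) (L := 1) (F := fun u => 2 + Real.sin u) hβ hρ hα hα1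
          hαβ (by norm_num) zero_le_one hFM hFL ha.1 hab hb.2
        rw [← hx₂' a ha.1, ← hx₂' b hb.1] at h2
        calc |x₂ b - x₂ a| ≤ (3 * (β + 2) + 2 * 3 + 1 * ρ) * (b - a) ^ (1/p) := h2
          _ = C * (b - a) ^ (1/p) := by rw [hCdef]
    intro s hs t ht
    rcases le_total s t with h | h
    · have hk := key s t hs ht h
      have habs : |s - t| = t - s := by
        rw [abs_sub_comm, abs_of_nonneg (by linarith)]
      rw [abs_sub_comm (x₁ s), abs_sub_comm (x₂ s), habs]
      exact hk
    · have hk := key t s ht hs h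
      have habs : |s - t| = s - t := abs_of_nonneg (by linarith)
      rw [habs]
      exact hk
  · intro t ht
    rw [hx₂ t ht]
    exact mul_pos (Real.rpow_pos_of_pos ht β) (two_add_sin_pos _)
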